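/- Let m, n, J be integers with m ≥ 1, n ≥ 1, J ≥ 1, let α > 0 be real, and fix a baseline label vector c₀ ∈ (Fin m)ⁿ. Then summing over all J-tuples of label vectors (c₁, …, c_J) ∈ ((Fin m)ⁿ)^J gives ∑_{(c₁,…,c_J)} Z(m, α, n) · ∏_{i=1}^{n} ∏_{s ∈ Fin m} Real.Gamma(α + (1 if c_{0i} = s else 0) + ∑_{j=1}^{J} (1 if c_{ji} = s else 0)) = 1, where Z(m, α, n) = ( m · Real.Gamma(α·m) / (Real.Gamma(α)^m · Real.Gamma(α·m + J + 1)) )ⁿ. -/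

import Mathlib

open Finset

lemma gamma_prod_ite (m : ℕ) (β : Fin m → ℝ) (hβ : ∀ s, 0 < β s) (a : Fin m) :
    ∏ s, Real.Gamma (β s + if a = s then 1 else 0)
      = β a * ∏ s, Real.Gamma (β s) := by
  have h : ∀ s : Fin m, Real.Gamma (β s + if a = s then 1 else 0)
      = (if a = s then β s else 1) * Real.Gamma (β s) := by
    intro s
    by_cases h : a = s
    · simp [h, Real.Gamma_add_one (hβ s).ne']
    · simp [h]
  rw [Finset.prod_congr rfl (fun s _ => h s), Finset.prod_mul_distrib,
    Finset.prod_ite_eq univ a β]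
  simp

lemma polya_sum (m : ℕ) (hm : 1 ≤ m) (J : ℕ) :
    ∀ (β : Fin m → ℝ), (∀ s, 0 < β s) →
    ∑ f : Fin J → Fin m, ∏ s, Real.Gamma (β s + ∑ j, if f j = s then (1:ℝ) else 0)
      = (∏ s, Real.Gamma (β s)) *
        (Real.Gamma ((∑ s, β s) + J) / Real.Gamma (∑ s, β s)) := by
  induction J with
  | zero =>
    intro β hβ
    have hB : 0 < ∑ s, β s :=
      Finset.sum_pos (fun s _ => hβ s) (univ_nonempty_iff.2 (Fin.pos_iff_nonempty.1 hm))
    have : Real.Gamma (∑ s, β s) ≠ 0 := (Real.Gamma_pos_of_pos hB).ne'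
    simp [Fintype.sum_unique, this]
  | succ J ih =>
    intro β hβ
    have hB : 0 < ∑ s, β s :=
      Finset.sum_pos (fun s _ => hβ s) (univ_nonempty_iff.2 (Fin.pos_iff_nonempty.1 hm))
    -- split off the first coordinate
    rw [← Equiv.sum_comp (Fin.consEquiv (fun _ : Fin (J+1) => Fin m)) (fun f => ∏ s, Real.Gamma (β s + ∑ j, if f j = s then (1:ℝ) else 0)),
      Fintype.sum_prod_type]
    have hstep : ∀ (a : Fin m),
        (∑ f : Fin J → Fin m, ∏ s, Real.Gamma (β s +
          ∑ j : Fin (J+1), if ((Fin.consEquiv (fun _ : Fin (J+1) => Fin m)) (a, f)) j = s then (1:ℝ) else 0))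
        = β a * (∏ s, Real.Gamma (β s)) *
            (Real.Gamma ((∑ s, β s) + 1 + J) / Real.Gamma ((∑ s, β s) + 1)) := by
      intro a
      have hcount : ∀ (f : Fin J → Fin m) (s : Fin m),
          (∑ j : Fin (J+1), if ((Fin.consEquiv (fun _ : Fin (J+1) => Fin m)) (a, f)) j = s then (1:ℝ) else 0)
            = (if a = s then 1 else 0) + ∑ j : Fin J, if f j = s then (1:ℝ) else 0 := by
        intro f s
        simp only [Fin.sum_univ_succ, Fin.consEquiv, Fin.consEquiv_apply, Equiv.coe_fn_mk, Fin.cons_zero,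
          Fin.cons_succ]
      have := ih (fun s => β s + if a = s then 1 else 0)
        (fun s => by split_ifs <;> linarith [hβ s])
      calc (∑ f : Fin J → Fin m, ∏ s, Real.Gamma (β s +
              ∑ j : Fin (J+1), if ((Fin.consEquiv (fun _ : Fin (J+1) => Fin m)) (a, f)) j = s then (1:ℝ) else 0))
          = ∑ f : Fin J → Fin m, ∏ s, Real.Gamma ((β s + if a = s then 1 else 0) +
              ∑ j : Fin J, if f j = s then (1:ℝ) else 0) := by
            refine Finset.sum_congr rfl fun f _ => Finset.prod_congr rfl fun s _ => ?_
            rw [hcount f s]; ring_nf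
        _ = (∏ s, Real.Gamma (β s + if a = s then 1 else 0)) *
              (Real.Gamma ((∑ s, (β s + if a = s then 1 else 0)) + J) /
                Real.Gamma (∑ s, (β s + if a = s then 1 else 0))) := this
        _ = β a * (∏ s, Real.Gamma (β s)) *
              (Real.Gamma ((∑ s, β s) + 1 + J) / Real.Gamma ((∑ s, β s) + 1)) := by
            rw [gamma_prod_ite m β hβ a]
            congr 2 <;> rw [Finset.sum_add_distrib, Finset.sum_ite_eq univ a (fun _ => (1:ℝ))] <;>
              simp
    rw [Finset.sum_congr rfl (fun a _ => hstep a), ← Finset.sum_mul, ← Finset.sum_mul]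
    have hΓ1 : Real.Gamma ((∑ s, β s) + 1) = (∑ s, β s) * Real.Gamma (∑ s, β s) :=
      Real.Gamma_add_one hB.ne'
    have h1 : Real.Gamma (∑ s, β s) ≠ 0 := (Real.Gamma_pos_of_pos hB).ne'
    have h2 : ((∑ s, β s) + 1 + J) = ((∑ s, β s) + (J+1:ℕ)) := by push_cast; ring
    rw [hΓ1, h2]
    field_simp
theorem prop1_pmf_sums_to_one (m n J : ℕ) (hm : 1 ≤ m) (hn : 1 ≤ n) (hJ : 1 ≤ J)
    (α : ℝ) (hα : 0 < α) (c₀ : Fin n → Fin m) :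
    (∑ c : Fin J → Fin n → Fin m,
        ((m : ℝ) * Real.Gamma (α * m) /
            (Real.Gamma α ^ m * Real.Gamma (α * m + J + 1))) ^ n *
          ∏ i, ∏ s,
            Real.Gamma (α + (if c₀ i = s then 1 else 0) +
              ∑ j, (if c j i = s then 1 else 0))) = 1 := by
  rw [← Finset.mul_sum]
  -- swap the two function arguments
  rw [← Equiv.sum_comp (Equiv.piComm (fun (_ : Fin n) (_ : Fin J) => Fin m))
    (fun c : Fin J → Fin n → Fin m => ∏ i, ∏ s,
        Real.Gamma (α + (if c₀ i = s then 1 else 0) +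
          ∑ j, (if c j i = s then (1:ℝ) else 0)))]
  have hswap : ∀ d : Fin n → Fin J → Fin m,
      (∏ i, ∏ s, Real.Gamma (α + (if c₀ i = s then 1 else 0) +
          ∑ j, (if (Equiv.piComm (fun (_ : Fin n) (_ : Fin J) => Fin m) d) j i = s
            then (1:ℝ) else 0)))
      = ∏ i, ∏ s, Real.Gamma (α + (if c₀ i = s then 1 else 0) +
          ∑ j, (if d i j = s then (1:ℝ) else 0)) := by
    intro d; rfl
  rw [Finset.sum_congr rfl (fun d _ => hswap d)]
  -- Fubini: product over i of a sum
  rw [show (Finset.univ : Finset (Fin n → Fin J → Fin m))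
      = Fintype.piFinset (fun _ => Finset.univ) from (Fintype.piFinset_univ).symm,
    ← Finset.prod_univ_sum (fun _ : Fin n => (Finset.univ : Finset (Fin J → Fin m)))
      (fun i f => ∏ s, Real.Gamma (α + (if c₀ i = s then 1 else 0) +
        ∑ j, if f j = s then (1:ℝ) else 0))]
  have hkey : ∀ i : Fin n,
      (∑ f : Fin J → Fin m, ∏ s, Real.Gamma (α + (if c₀ i = s then 1 else 0) +
          ∑ j, (if f j = s then (1:ℝ) else 0)))
      = α * Real.Gamma α ^ m * (Real.Gamma (α * m + 1 + J) / Real.Gamma (α * m + 1)) := by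
    intro i
    have := polya_sum m hm J (fun s => α + if c₀ i = s then 1 else 0)
      (fun s => by split_ifs <;> linarith)
    rw [this, gamma_prod_ite m (fun _ => α) (fun _ => hα) (c₀ i)]
    have hsum : (∑ s : Fin m, (α + if c₀ i = s then (1:ℝ) else 0)) = α * m + 1 := by
      rw [Finset.sum_add_distrib, Finset.sum_ite_eq Finset.univ (c₀ i) (fun _ => (1:ℝ))]
      simp [mul_comm]
    rw [hsum]
    simp
  rw [Finset.prod_congr rfl (fun i _ => hkey i), Finset.prod_const, Finset.card_univ,
    Fintype.card_fin, ← mul_pow]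
  have hΓα : Real.Gamma α ≠ 0 := (Real.Gamma_pos_of_pos hα).ne'
  have hαm : (0:ℝ) < α * m := by
    have : (1:ℝ) ≤ m := by exact_mod_cast hm
    nlinarith
  have hΓαm : Real.Gamma (α * m) ≠ 0 := (Real.Gamma_pos_of_pos hαm).ne'
  have hΓ1 : Real.Gamma (α * m + 1) = (α * m) * Real.Gamma (α * m) :=
    Real.Gamma_add_one hαm.ne'
  have hΓJ : Real.Gamma (α * m + ↑J + 1) ≠ 0 := by
    have : (0:ℝ) < α * m + J + 1 := by positivity
    exact (Real.Gamma_pos_of_pos this).ne'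
  have hm0 : (m:ℝ) ≠ 0 := by positivity
  have harg : α * m + 1 + ↑J = α * m + ↑J + 1 := by ring
  rw [harg, hΓ1]
  field_simp
  ring
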